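/- Let X be an m×p real matrix, P = X(X*X)⁺X* the orthogonal projection onto the range of X, and Y an m×n matrix. For each r, let (PY)ᵣ be a best rank-≤r approximation of PY in Frobenius norm, and let Âᵣ minimize ‖Y − XA‖ over p×n matrices A of rank at most r. Then XÂᵣ = (PY)ᵣ, i.e., ‖Y − (PY)ᵣ‖ = min over rank-≤r matrices B of the form XA of ‖Y − B‖, and (PY)ᵣ lies in the range of X. -/

import Mathlib

open MeasureTheory ProbabilityTheory Matrix Finset Real

/-- The `k`-th largest singular value (0-indexed) of a real matrix. -/
noncomputable def sv {m n : ℕ} (M : Matrix (Fin m) (Fin n) ℝ) : ℕ → ℝ :=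
  fun k => Real.sqrt (((List.ofFn
    (show (Mᵀ * M).IsHermitian by simpa using Matrix.isHermitian_conjTranspose_mul_self M).eigenvalues).insertionSort (· ≥ ·)).getD k 0)

/-- The Ky-Fan `(2,r)` norm: square root of the sum of the `r` largest squared singular values. -/
noncomputable def kyFan {m n : ℕ} (r : ℕ) (M : Matrix (Fin m) (Fin n) ℝ) : ℝ :=
  Real.sqrt (∑ k ∈ Finset.range r, (sv M k) ^ 2)

/-- The Frobenius (Hilbert-Schmidt) norm. -/
noncomputable def frob {m n : ℕ} (M : Matrix (Fin m) (Fin n) ℝ) : ℝ :=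
  Real.sqrt (∑ i, ∑ j, (M i j) ^ 2)

lemma frob_nonneg {m n : ℕ} (M : Matrix (Fin m) (Fin n) ℝ) : 0 ≤ frob M :=
  Real.sqrt_nonneg _

lemma frob_sum_nonneg {m n : ℕ} (M : Matrix (Fin m) (Fin n) ℝ) :
    0 ≤ ∑ i, ∑ j, (M i j) ^ 2 := by positivity

lemma frob_sq {m n : ℕ} (M : Matrix (Fin m) (Fin n) ℝ) :
    frob M ^ 2 = ∑ i, ∑ j, (M i j) ^ 2 :=
  Real.sq_sqrt (frob_sum_nonneg M)

lemma frob_sq_trace {m n : ℕ} (M : Matrix (Fin m) (Fin n) ℝ) :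
    frob M ^ 2 = (Mᵀ * M).trace := by
  rw [frob_sq, Matrix.trace, Finset.sum_comm]
  simp [Matrix.diag, Matrix.mul_apply, sq]

lemma conj_transpose_eq {m n : ℕ} (M : Matrix (Fin m) (Fin n) ℝ) : Mᴴ = Mᵀ := by
  ext i j; simp [Matrix.conjTranspose_apply]

/-- Cancellation: `XᵀX M = XᵀX N → X M = X N`. -/
lemma cancel {m p q : ℕ} (X : Matrix (Fin m) (Fin p) ℝ)
    (M N : Matrix (Fin p) (Fin q) ℝ) (h : Xᵀ * X * M = Xᵀ * X * N) :
    X * M = X * N := by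
  have key : (X * (M - N))ᵀ * (X * (M - N)) = 0 := by
    have h0 : Xᵀ * X * (M - N) = 0 := by
      rw [Matrix.mul_sub, h, sub_self]
    calc (X * (M - N))ᵀ * (X * (M - N)) = (M - N)ᵀ * (Xᵀ * X * (M - N)) := by
          rw [Matrix.transpose_mul]; rw [Matrix.mul_assoc, Matrix.mul_assoc]
      _ = 0 := by rw [h0, Matrix.mul_zero]
  have hz : X * (M - N) = 0 := by
    rw [← Matrix.conjTranspose_mul_self_eq_zero, conj_transpose_eq]; exact key
  rw [Matrix.mul_sub] at hz
  exact sub_eq_zero.mp hz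


lemma pyth {m n : ℕ} (D E : Matrix (Fin m) (Fin n) ℝ) (h : Dᵀ * E = 0) :
    frob (D + E) ^ 2 = frob D ^ 2 + frob E ^ 2 := by
  have h2 : Eᵀ * D = 0 := by
    have := congrArg Matrix.transpose h
    simpa [Matrix.transpose_mul] using this
  rw [frob_sq_trace, frob_sq_trace, frob_sq_trace, Matrix.transpose_add, Matrix.add_mul,
    Matrix.mul_add, Matrix.mul_add, h, h2]
  simp [Matrix.trace_add]

lemma frob_le {m n : ℕ} {A B : Matrix (Fin m) (Fin n) ℝ} (h : frob A ^ 2 ≤ frob B ^ 2) :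
    frob A ≤ frob B := by
  have := Real.sqrt_le_sqrt h
  rwa [Real.sqrt_sq (frob_nonneg A), Real.sqrt_sq (frob_nonneg B)] at this

lemma frob_eq_zero {m n : ℕ} {M : Matrix (Fin m) (Fin n) ℝ} (h : frob M ^ 2 ≤ 0) : M = 0 := by
  have h0 : ∑ i, ∑ j, (M i j) ^ 2 = 0 :=
    le_antisymm (by rw [← frob_sq]; exact h) (frob_sum_nonneg M)
  ext i j
  have hi := (Finset.sum_eq_zero_iff_of_nonneg
    (fun i _ => Finset.sum_nonneg fun j _ => sq_nonneg _)).mp h0 i (Finset.mem_univ i)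
  have hj := (Finset.sum_eq_zero_iff_of_nonneg (fun j _ => sq_nonneg _)).mp hi j
    (Finset.mem_univ j)
  simpa using sq_eq_zero_iff.mp hj

theorem stmt6 {m p n : ℕ} {r : ℕ} (X : Matrix (Fin m) (Fin p) ℝ)
    (Wp : Matrix (Fin p) (Fin p) ℝ)
    (h1 : (Xᵀ * X) * Wp * (Xᵀ * X) = Xᵀ * X)
    (h2 : Wp * (Xᵀ * X) * Wp = Wp)
    (h3 : ((Xᵀ * X) * Wp)ᵀ = (Xᵀ * X) * Wp)
    (h4 : (Wp * (Xᵀ * X))ᵀ = Wp * (Xᵀ * X))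
    (Y B : Matrix (Fin m) (Fin n) ℝ) (hBrank : B.rank ≤ r)
    (hBbest : ∀ C : Matrix (Fin m) (Fin n) ℝ, C.rank ≤ r →
      frob ((X * Wp * Xᵀ) * Y - B) ≤ frob ((X * Wp * Xᵀ) * Y - C)) :
    (∃ A : Matrix (Fin p) (Fin n) ℝ, B = X * A) ∧
      ∀ A : Matrix (Fin p) (Fin n) ℝ, A.rank ≤ r → frob (Y - B) ≤ frob (Y - X * A) := by
  set P := X * Wp * Xᵀ with hP
  -- basic algebraic facts about P
  have hXtX : (Xᵀ * X)ᵀ = Xᵀ * X := by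
    rw [Matrix.transpose_mul, Matrix.transpose_transpose]
  have hWXX : X * (Wp * (Xᵀ * X)) = X := by
    have := cancel X (Wp * (Xᵀ * X)) 1 (by
      rw [Matrix.mul_one, ← Matrix.mul_assoc]; exact h1)
    simpa using this
  have hPX : P * X = X := by
    rw [hP, Matrix.mul_assoc (X * Wp) Xᵀ X, Matrix.mul_assoc X Wp (Xᵀ * X)]
    exact hWXX
  have cancel' : ∀ {q : ℕ} (M N : Matrix (Fin q) (Fin p) ℝ),
      M * (Xᵀ * X) = N * (Xᵀ * X) → M * Xᵀ = N * Xᵀ := by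
    intro q M N h
    have h' : Xᵀ * X * Mᵀ = Xᵀ * X * Nᵀ := by
      have := congrArg Matrix.transpose h
      simpa [Matrix.transpose_mul, hXtX] using this
    have := congrArg Matrix.transpose (cancel X Mᵀ Nᵀ h')
    simpa [Matrix.transpose_mul] using this
  have e1 : Wpᵀ * (Xᵀ * X) = Xᵀ * X * Wp := by
    rw [Matrix.transpose_mul, hXtX] at h3
    exact h3
  have hXXW : X * (Xᵀ * X) * Wp = X := by
    have step : (Wpᵀ * (Xᵀ * X)) * Xᵀ = (1 : Matrix (Fin p) (Fin p) ℝ) * Xᵀ := by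
      apply cancel'
      rw [Matrix.one_mul, e1]
      exact h1
    have := congrArg Matrix.transpose step
    simpa [Matrix.transpose_mul, hXtX, Matrix.mul_assoc] using this
  have hPsym : Pᵀ = P := by
    have goal : (X * Wpᵀ) * Xᵀ = (X * Wp) * Xᵀ := by
      apply cancel'
      have lhs : X * Wpᵀ * (Xᵀ * X) = X := by
        rw [Matrix.mul_assoc, e1, ← Matrix.mul_assoc]; exact hXXW
      have rhs : X * Wp * (Xᵀ * X) = X := by
        rw [Matrix.mul_assoc]; exact hWXX
      rw [lhs, rhs]
    rw [hP, Matrix.transpose_mul, Matrix.transpose_mul, Matrix.transpose_transpose,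
      ← Matrix.mul_assoc]
    exact goal
  have hPP : P * P = P := by
    calc P * P = (P * X) * Wp * Xᵀ := by rw [hP]; simp only [Matrix.mul_assoc]
      _ = P := by rw [hPX, hP]
  -- orthogonality of the range of P and its complement
  have horth : ∀ (U V : Matrix (Fin m) (Fin n) ℝ), (V - P * V)ᵀ * (P * U) = 0 := by
    intro U V
    rw [Matrix.transpose_sub, Matrix.sub_mul, Matrix.transpose_mul, hPsym]
    rw [Matrix.mul_assoc Vᵀ P (P * U), ← Matrix.mul_assoc P P U, hPP]
    exact sub_self _
  have horth2 : ∀ (U V : Matrix (Fin m) (Fin n) ℝ), (P * U)ᵀ * (V - P * V) = 0 := by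
    intro U V
    have := congrArg Matrix.transpose (horth U V)
    simpa [Matrix.transpose_mul] using this
  -- Step 1 : P * B = B
  have hPB : P * B = B := by
    have hrank : (P * B).rank ≤ r := le_trans (Matrix.rank_mul_le_right P B) hBrank
    have hbest := hBbest (P * B) hrank
    have hDE : P * Y - B = (P * Y - P * B) + (P * B - B) := by abel
    have hD : P * Y - P * B = P * (Y - B) := by rw [Matrix.mul_sub]
    have hOrth : (P * Y - P * B)ᵀ * (P * B - B) = 0 := by
      rw [hD]
      have h0 := horth2 (Y - B) B
      have : P * B - B = -(B - P * B) := by abel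
      rw [this, Matrix.mul_neg, h0, neg_zero]
    have hpyth := pyth (P * Y - P * B) (P * B - B) hOrth
    rw [← hDE] at hpyth
    have hsq : frob (P * Y - B) ^ 2 ≤ frob (P * Y - P * B) ^ 2 :=
      pow_le_pow_left₀ (frob_nonneg _) hbest 2
    have : frob (P * B - B) ^ 2 ≤ 0 := by linarith
    have := frob_eq_zero this
    exact sub_eq_zero.mp this
  refine ⟨⟨Wp * (Xᵀ * B), ?_⟩, ?_⟩
  · have : X * (Wp * (Xᵀ * B)) = P * B := by
      rw [hP, Matrix.mul_assoc, Matrix.mul_assoc]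
    rw [this, hPB]
  · intro A hA
    have hCrank : (X * A).rank ≤ r := le_trans (Matrix.rank_mul_le_right X A) hA
    have hbest := hBbest (X * A) hCrank
    have hPXA : P * (X * A) = X * A := by rw [← Matrix.mul_assoc, hPX]
    -- Pythagoras for B
    have hOrth1 : (Y - P * Y)ᵀ * (P * Y - B) = 0 := by
      have : P * Y - B = P * (Y - B) := by rw [Matrix.mul_sub, hPB]
      rw [this]; exact horth (Y - B) Y
    have hp1 := pyth (Y - P * Y) (P * Y - B) hOrth1
    rw [sub_add_sub_cancel] at hp1
    -- Pythagoras for X * A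
    have hOrth2 : (Y - P * Y)ᵀ * (P * Y - X * A) = 0 := by
      have : P * Y - X * A = P * (Y - X * A) := by rw [Matrix.mul_sub, hPXA]
      rw [this]; exact horth (Y - X * A) Y
    have hp2 := pyth (Y - P * Y) (P * Y - X * A) hOrth2
    rw [sub_add_sub_cancel] at hp2
    have hsq : frob (P * Y - B) ^ 2 ≤ frob (P * Y - X * A) ^ 2 :=
      pow_le_pow_left₀ (frob_nonneg _) hbest 2
    apply frob_le
    rw [hp1, hp2]
    linarith
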